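/- Let θ_1 < θ_2 < θ_3 < θ_1 + π be real numbers, and define six points on the unit circle by z_k = e^{iθ_k} for k = 1,2,3 and z_{k+3} = −z_k (indices mod 6). For each k (mod 6), assume the line through z_{k−1} and z_{k+1} and the line through z_k and z_{k+2} are not parallel, and let w_k be their intersection point. Then for each k there is a circle C_k passing through the three points w_{k−1}, z_k, w_k, such that: (1) C_k is tangent to the unit circle at z_k (the two circles meet at z_k with a common tangent line, C_k lying inside the closed unit disc); and (2) for each k, the circles C_k and C_{k+1} are externally tangent at the point w_k. In particular the six circles C_1, …, C_6 form a flower around the unit circle which is invariant under the point reflection z ↦ −z. -/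

import Mathlib

open Complex in
private lemma flower_expI (x : ℝ) :
    Complex.exp (x * I) = (Real.cos x : ℂ) + (Real.sin x : ℂ) * I := by
  rw [Complex.exp_mul_I, ← Complex.ofReal_cos, ← Complex.ofReal_sin]

open Complex in
private lemma flower_master (A B : ℝ) :
    (Real.sin A : ℂ) * (Real.cos A : ℂ) *
        (Complex.exp ((2*A : ℝ) * I) * Complex.exp ((2*B : ℝ) * I))
      + (Real.sin B : ℂ) * (Real.cos B : ℂ)
    = (Real.sin (A+B) : ℂ) * (Real.cos (A+B) : ℂ) * Complex.exp ((2*A : ℝ) * I) := by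
  rw [flower_expI, flower_expI, Real.cos_two_mul', Real.sin_two_mul, Real.cos_two_mul',
    Real.sin_two_mul, Real.sin_add, Real.cos_add]
  rw [Complex.ext_iff]
  constructor
  · simp only [Complex.add_re, Complex.add_im, Complex.mul_re, Complex.mul_im, Complex.ofReal_re,
      Complex.ofReal_im, Complex.I_re, Complex.I_im]
    linear_combination (-(Real.sin B * Real.cos B) * (1 + Real.sin A^2 + Real.cos A^2)) *
      Real.sin_sq_add_cos_sq A
  · simp only [Complex.add_re, Complex.add_im, Complex.mul_re, Complex.mul_im, Complex.ofReal_re,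
      Complex.ofReal_im, Complex.I_re, Complex.I_im]
    ring

private lemma flower_line_inter_unique {a b d₁ d₂ x y : ℂ}
    (hnp : ¬ ∃ t : ℝ, d₂ = t • d₁)
    (hx₁ : ∃ t : ℝ, x = a + t • d₁) (hx₂ : ∃ t : ℝ, x = b + t • d₂)
    (hy₁ : ∃ t : ℝ, y = a + t • d₁) (hy₂ : ∃ t : ℝ, y = b + t • d₂) : x = y := by
  obtain ⟨t₁, ht₁⟩ := hx₁
  obtain ⟨s₁, hs₁⟩ := hx₂
  obtain ⟨t₂, ht₂⟩ := hy₁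
  obtain ⟨s₂, hs₂⟩ := hy₂
  by_cases hs : s₁ = s₂
  · rw [hs₁, hs₂, hs]
  · exfalso
    apply hnp
    refine ⟨(s₁ - s₂)⁻¹ * (t₁ - t₂), ?_⟩
    have hs0 : (s₁ : ℂ) - s₂ ≠ 0 := by
      simpa [sub_eq_zero] using fun h => hs (by exact_mod_cast h)
    simp only [Complex.real_smul] at ht₁ hs₁ ht₂ hs₂ ⊢
    push_cast
    rw [eq_comm, mul_assoc, inv_mul_eq_iff_eq_mul₀ hs0]
    linear_combination hs₁ - ht₁ + ht₂ - hs₂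

open Complex in
set_option maxHeartbeats 4000000 in
/-- The normalized conformally symmetric flower: for antipodally symmetric points
`z_k` on the unit circle (`z_k = e^{iθ_k}`, `z_{k+3} = -z_k`), with `w_k` the
intersection of the (non-parallel) lines `(z_{k-1}, z_{k+1})` and `(z_k, z_{k+2})`,
there exist circles `C_k` (centers `c_k`, radii `r_k > 0`) through `w_{k-1}, z_k, w_k`
that are internally tangent to the unit circle at `z_k` (so `C_k` lies in the closed
unit disc), with `C_k` and `C_{k+1}` externally tangent at `w_k`, and the whole
flower invariant under the point reflection `z ↦ -z`. -/
theorem conformally_symmetric_flower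
    (θ₁ θ₂ θ₃ : ℝ) (h12 : θ₁ < θ₂) (h23 : θ₂ < θ₃) (h31 : θ₃ < θ₁ + Real.pi)
    (z : ZMod 6 → ℂ)
    (hz1 : z 1 = Complex.exp (θ₁ * I))
    (hz2 : z 2 = Complex.exp (θ₂ * I))
    (hz3 : z 3 = Complex.exp (θ₃ * I))
    (hzsym : ∀ k : ZMod 6, z (k + 3) = -z k)
    (hnp : ∀ k : ZMod 6, ¬ ∃ t : ℝ, z (k + 2) - z k = t • (z (k + 1) - z (k - 1)))
    (w : ZMod 6 → ℂ)
    (hw : ∀ k : ZMod 6,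
      (∃ t : ℝ, w k = z (k - 1) + t • (z (k + 1) - z (k - 1))) ∧
      (∃ t : ℝ, w k = z k + t • (z (k + 2) - z k))) :
    ∃ (c : ZMod 6 → ℂ) (r : ZMod 6 → ℝ),
      ∀ k : ZMod 6,
        0 < r k ∧
        dist (w (k - 1)) (c k) = r k ∧
        dist (z k) (c k) = r k ∧
        dist (w k) (c k) = r k ∧
        dist (c k) 0 = 1 - r k ∧
        dist (c k) (c (k + 1)) = r k + r (k + 1) ∧
        c (k + 3) = -c k ∧ r (k + 3) = r k := by
  have hπ := Real.pi_pos
  set A := (θ₂ - θ₁)/2 with hAdef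
  set B := (θ₃ - θ₂)/2 with hBdef
  have hA0 : 0 < A := by rw [hAdef]; linarith
  have hB0 : 0 < B := by rw [hBdef]; linarith
  have hABlt : A + B < Real.pi/2 := by rw [hAdef, hBdef]; linarith
  -- positivity of basic trig quantities
  have hcA : 0 < Real.cos A := Real.cos_pos_of_mem_Ioo ⟨by linarith, by linarith⟩
  have hcB : 0 < Real.cos B := Real.cos_pos_of_mem_Ioo ⟨by linarith, by linarith⟩
  have hsA : 0 < Real.sin A := Real.sin_pos_of_pos_of_lt_pi hA0 (by linarith)
  have hsB : 0 < Real.sin B := Real.sin_pos_of_pos_of_lt_pi hB0 (by linarith)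
  have hcAB : 0 < Real.cos (A+B) := Real.cos_pos_of_mem_Ioo ⟨by linarith, by linarith⟩
  have hsAB : 0 < Real.sin (A+B) := Real.sin_pos_of_pos_of_lt_pi (by linarith) (by linarith)
  -- the three radii
  set rA := (Real.cos (A+B) * Real.sin A)/(Real.sin (A+B) * Real.cos A) with hrAdef
  set rB := (Real.sin A * Real.sin B)/(Real.cos A * Real.cos B) with hrBdef
  set rC := (Real.sin B * Real.cos (A+B))/(Real.cos B * Real.sin (A+B)) with hrCdef
  have hrA0 : 0 < rA := by rw [hrAdef]; positivity
  have hrB0 : 0 < rB := by rw [hrBdef]; positivity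
  have hrC0 : 0 < rC := by rw [hrCdef]; positivity
  have hsinsub : Real.sin (A+B) * Real.cos A - Real.cos (A+B) * Real.sin A = Real.sin B := by
    rw [← Real.sin_sub]; congr 1; ring
  have hcosadd : Real.cos (A+B) = Real.cos A * Real.cos B - Real.sin A * Real.sin B :=
    Real.cos_add A B
  have hsinadd : Real.sin (A+B) = Real.sin A * Real.cos B + Real.cos A * Real.sin B :=
    Real.sin_add A B
  have hsinsub' : Real.sin (A+B) * Real.cos B - Real.cos (A+B) * Real.sin B = Real.sin A := by
    rw [← Real.sin_sub]; congr 1; ring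
  have hrA1 : rA < 1 := by
    rw [hrAdef, div_lt_one (by positivity)]; linarith [hsinsub, hsB]
  have hrB1 : rB < 1 := by
    rw [hrBdef, div_lt_one (by positivity)]; linarith [hcosadd, hcAB]
  have hrC1 : rC < 1 := by
    rw [hrCdef, div_lt_one (by positivity)]; linarith [hsinsub', hsA]
  -- cleared (coerced) defining equations for the radii
  have hrAc : (Real.cos A : ℂ) * (Real.sin (A+B) : ℂ) * (rA : ℂ)
      = (Real.cos (A+B) : ℂ) * (Real.sin A : ℂ) := by
    have : Real.cos A * Real.sin (A+B) * rA = Real.cos (A+B) * Real.sin A := by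
      rw [hrAdef]; field_simp
    exact_mod_cast this
  have hrBc : (Real.cos A : ℂ) * (Real.cos B : ℂ) * (rB : ℂ)
      = (Real.sin A : ℂ) * (Real.sin B : ℂ) := by
    have : Real.cos A * Real.cos B * rB = Real.sin A * Real.sin B := by
      rw [hrBdef]; field_simp
    exact_mod_cast this
  have hrCc : (Real.cos B : ℂ) * (Real.sin (A+B) : ℂ) * (rC : ℂ)
      = (Real.sin B : ℂ) * (Real.cos (A+B) : ℂ) := by
    have : Real.cos B * Real.sin (A+B) * rC = Real.sin B * Real.cos (A+B) := by
      rw [hrCdef]; field_simp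
    exact_mod_cast this
  have hPc : (Real.cos (A+B) : ℂ)
      = (Real.cos A : ℂ) * (Real.cos B : ℂ) - (Real.sin A : ℂ) * (Real.sin B : ℂ) := by
    exact_mod_cast congrArg (Complex.ofReal) hcosadd
  have hQc : (Real.sin (A+B) : ℂ)
      = (Real.sin A : ℂ) * (Real.cos B : ℂ) + (Real.cos A : ℂ) * (Real.sin B : ℂ) := by
    exact_mod_cast congrArg (Complex.ofReal) hsinadd
  have hPA : (Real.sin A : ℂ)^2 + (Real.cos A : ℂ)^2 = 1 := by
    exact_mod_cast congrArg (Complex.ofReal) (Real.sin_sq_add_cos_sq A)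
  have hPB : (Real.sin B : ℂ)^2 + (Real.cos B : ℂ)^2 = 1 := by
    exact_mod_cast congrArg (Complex.ofReal) (Real.sin_sq_add_cos_sq B)
  have hF : ((Real.cos A : ℂ) * (Real.cos B : ℂ) * (Real.sin (A+B) : ℂ)) ≠ 0 := by
    refine mul_ne_zero (mul_ne_zero ?_ ?_) ?_ <;>
      exact Complex.ofReal_ne_zero.mpr (by positivity)
  -- exponential relations
  have hz2e : Complex.exp (θ₂ * I) = Complex.exp (θ₁ * I) * Complex.exp ((2*A : ℝ) * I) := by
    rw [← Complex.exp_add]; congr 1; rw [hAdef]; push_cast; ring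
  have hz3e : Complex.exp (θ₃ * I)
      = Complex.exp (θ₁ * I) * (Complex.exp ((2*A : ℝ) * I) * Complex.exp ((2*B : ℝ) * I)) := by
    rw [← Complex.exp_add, ← Complex.exp_add]; congr 1; rw [hAdef, hBdef]; push_cast; ring
  have hm := flower_master A B
  -- the three key identities
  have key₁ : (1 - (rB : ℂ)) * Complex.exp (θ₂ * I) - ((rA : ℂ) + (rB : ℂ)) * Complex.exp (θ₃ * I)
      = (1 - (rA : ℂ)) * Complex.exp (θ₁ * I) := by
    refine mul_left_cancel₀ hF ?_
    rw [hz2e, hz3e]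
    linear_combination
      (-(Real.sin (A+B) : ℂ) * Complex.exp (θ₁ * I) * Complex.exp ((2*A : ℝ) * I)
        - (Real.sin (A+B) : ℂ) * Complex.exp (θ₁ * I) * Complex.exp ((2*A : ℝ) * I)
          * Complex.exp ((2*B : ℝ) * I)) * hrBc
      + ((Real.cos B : ℂ) * Complex.exp (θ₁ * I)
        - (Real.cos B : ℂ) * Complex.exp (θ₁ * I) * Complex.exp ((2*A : ℝ) * I)
          * Complex.exp ((2*B : ℝ) * I)) * hrAc
      + (-Complex.exp (θ₁ * I)) * hm
      + (-(Real.sin (A+B) : ℂ) * Complex.exp (θ₁ * I) * Complex.exp ((2*A : ℝ) * I)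
        - (Real.sin A : ℂ) * (Real.cos B : ℂ) * Complex.exp (θ₁ * I)
          * Complex.exp ((2*A : ℝ) * I) * Complex.exp ((2*B : ℝ) * I)
        + (Real.sin A : ℂ) * (Real.cos B : ℂ) * Complex.exp (θ₁ * I)) * hPc
      + (-(Real.sin A : ℂ) * (Real.sin B : ℂ) * Complex.exp (θ₁ * I)
          * Complex.exp ((2*A : ℝ) * I) * Complex.exp ((2*B : ℝ) * I)
        - (Real.cos A : ℂ) * (Real.cos B : ℂ) * Complex.exp (θ₁ * I)) * hQc
      + (-(Real.sin A : ℂ) * (Real.cos A : ℂ) * Complex.exp (θ₁ * I)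
          * Complex.exp ((2*A : ℝ) * I) * Complex.exp ((2*B : ℝ) * I)) * hPB
      + (-(Real.sin B : ℂ) * (Real.cos B : ℂ) * Complex.exp (θ₁ * I)) * hPA
  have key₂ : (1 - (rC : ℂ)) * Complex.exp (θ₃ * I) + ((rB : ℂ) + (rC : ℂ)) * Complex.exp (θ₁ * I)
      = (1 - (rB : ℂ)) * Complex.exp (θ₂ * I) := by
    refine mul_left_cancel₀ hF ?_
    rw [hz2e, hz3e]
    linear_combination
      ((Real.cos A : ℂ) * Complex.exp (θ₁ * I)
        - (Real.cos A : ℂ) * Complex.exp (θ₁ * I) * Complex.exp ((2*A : ℝ) * I)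
          * Complex.exp ((2*B : ℝ) * I)) * hrCc
      + ((Real.sin (A+B) : ℂ) * Complex.exp (θ₁ * I)
        + (Real.sin (A+B) : ℂ) * Complex.exp (θ₁ * I) * Complex.exp ((2*A : ℝ) * I)) * hrBc
      + (Complex.exp (θ₁ * I)) * hm
      + ((Real.sin (A+B) : ℂ) * Complex.exp (θ₁ * I) * Complex.exp ((2*A : ℝ) * I)
        - (Real.cos A : ℂ) * (Real.sin B : ℂ) * Complex.exp (θ₁ * I)
          * Complex.exp ((2*A : ℝ) * I) * Complex.exp ((2*B : ℝ) * I)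
        + (Real.cos A : ℂ) * (Real.sin B : ℂ) * Complex.exp (θ₁ * I)) * hPc
      + ((Real.cos A : ℂ) * (Real.cos B : ℂ) * Complex.exp (θ₁ * I)
          * Complex.exp ((2*A : ℝ) * I) * Complex.exp ((2*B : ℝ) * I)
        + (Real.sin A : ℂ) * (Real.sin B : ℂ) * Complex.exp (θ₁ * I)) * hQc
      + ((Real.cos A : ℂ) * (Real.sin A : ℂ) * Complex.exp (θ₁ * I)
          * Complex.exp ((2*A : ℝ) * I) * Complex.exp ((2*B : ℝ) * I)) * hPB
      + ((Real.sin B : ℂ) * (Real.cos B : ℂ) * Complex.exp (θ₁ * I)) * hPA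
  have key₃ : -((1 - (rA : ℂ)) * Complex.exp (θ₁ * I))
        + ((rC : ℂ) + (rA : ℂ)) * Complex.exp (θ₂ * I)
      = (1 - (rC : ℂ)) * Complex.exp (θ₃ * I) := by
    refine mul_left_cancel₀ hF ?_
    rw [hz2e, hz3e]
    linear_combination
      ((Real.cos B : ℂ) * Complex.exp (θ₁ * I)
        + (Real.cos B : ℂ) * Complex.exp (θ₁ * I) * Complex.exp ((2*A : ℝ) * I)) * hrAc
      + ((Real.cos A : ℂ) * Complex.exp (θ₁ * I) * Complex.exp ((2*A : ℝ) * I)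
        + (Real.cos A : ℂ) * Complex.exp (θ₁ * I) * Complex.exp ((2*A : ℝ) * I)
          * Complex.exp ((2*B : ℝ) * I)) * hrCc
      + (-Complex.exp (θ₁ * I)) * hm
      + ((Real.sin A : ℂ) * (Real.cos B : ℂ) * Complex.exp (θ₁ * I)
        + (Real.cos A : ℂ) * (Real.sin B : ℂ) * Complex.exp (θ₁ * I)
          * Complex.exp ((2*A : ℝ) * I) * Complex.exp ((2*B : ℝ) * I)) * hPc
      + (-(Real.cos A : ℂ) * (Real.cos B : ℂ) * Complex.exp (θ₁ * I)
        - (Real.cos (A+B) : ℂ) * Complex.exp (θ₁ * I) * Complex.exp ((2*A : ℝ) * I)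
        - (Real.cos A : ℂ) * (Real.cos B : ℂ) * Complex.exp (θ₁ * I)
          * Complex.exp ((2*A : ℝ) * I) * Complex.exp ((2*B : ℝ) * I)) * hQc
      + (-(Real.cos B : ℂ) * (Real.sin B : ℂ) * Complex.exp (θ₁ * I)) * hPA
      + (-(Real.cos A : ℂ) * (Real.sin A : ℂ) * Complex.exp (θ₁ * I)
          * Complex.exp ((2*A : ℝ) * I) * Complex.exp ((2*B : ℝ) * I)) * hPB
  -- the remaining z-values
  have hz0 : z 0 = -Complex.exp (θ₃ * I) := by
    have h := hzsym 3
    rw [show ((3 : ZMod 6) + 3) = 0 by decide, hz3] at h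
    exact h
  have hz4 : z 4 = -Complex.exp (θ₁ * I) := by
    have h := hzsym 1
    rw [show ((1 : ZMod 6) + 3) = 4 by decide, hz1] at h
    exact h
  have hz5 : z 5 = -Complex.exp (θ₂ * I) := by
    have h := hzsym 2
    rw [show ((2 : ZMod 6) + 3) = 5 by decide, hz2] at h
    exact h
  -- the radius function
  set r' : ZMod 6 → ℝ := ![rC, rA, rB, rC, rA, rB] with hr'
  have hv0 : r' 0 = rC := by rw [hr']; exact rfl
  have hv1 : r' 1 = rA := by rw [hr']; exact rfl
  have hv2 : r' 2 = rB := by rw [hr']; exact rfl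
  have hv3 : r' 3 = rC := by rw [hr']; exact rfl
  have hv4 : r' 4 = rA := by rw [hr']; exact rfl
  have hv5 : r' 5 = rB := by rw [hr']; exact rfl
  clear_value r'
  have hr'pos : ∀ k : ZMod 6, 0 < r' k := by
    intro k
    fin_cases k
    · show 0 < r' 0; rw [hv0]; exact hrC0
    · show 0 < r' 1; rw [hv1]; exact hrA0
    · show 0 < r' 2; rw [hv2]; exact hrB0
    · show 0 < r' 3; rw [hv3]; exact hrC0
    · show 0 < r' 4; rw [hv4]; exact hrA0
    · show 0 < r' 5; rw [hv5]; exact hrB0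
  have hr'lt : ∀ k : ZMod 6, r' k < 1 := by
    intro k
    fin_cases k
    · show r' 0 < 1; rw [hv0]; exact hrC1
    · show r' 1 < 1; rw [hv1]; exact hrA1
    · show r' 2 < 1; rw [hv2]; exact hrB1
    · show r' 3 < 1; rw [hv3]; exact hrC1
    · show r' 4 < 1; rw [hv4]; exact hrA1
    · show r' 5 < 1; rw [hv5]; exact hrB1
  have hr'3 : ∀ k : ZMod 6, r' (k + 3) = r' k := by
    intro k
    fin_cases k
    · show r' (0+3) = r' 0
      rw [show ((0 : ZMod 6)+3) = 3 by decide, hv3, hv0]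
    · show r' (1+3) = r' 1
      rw [show ((1 : ZMod 6)+3) = 4 by decide, hv4, hv1]
    · show r' (2+3) = r' 2
      rw [show ((2 : ZMod 6)+3) = 5 by decide, hv5, hv2]
    · show r' (3+3) = r' 3
      rw [show ((3 : ZMod 6)+3) = 0 by decide, hv0, hv3]
    · show r' (4+3) = r' 4
      rw [show ((4 : ZMod 6)+3) = 1 by decide, hv1, hv4]
    · show r' (5+3) = r' 5
      rw [show ((5 : ZMod 6)+3) = 2 by decide, hv2, hv5]
  have habs : ∀ k : ZMod 6, ‖z k‖ = 1 := by
    intro k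
    fin_cases k
    · show ‖z 0‖ = 1
      rw [hz0, norm_neg]; exact Complex.norm_exp_ofReal_mul_I θ₃
    · show ‖z 1‖ = 1
      rw [hz1]; exact Complex.norm_exp_ofReal_mul_I θ₁
    · show ‖z 2‖ = 1
      rw [hz2]; exact Complex.norm_exp_ofReal_mul_I θ₂
    · show ‖z 3‖ = 1
      rw [hz3]; exact Complex.norm_exp_ofReal_mul_I θ₃
    · show ‖z 4‖ = 1
      rw [hz4, norm_neg]; exact Complex.norm_exp_ofReal_mul_I θ₁
    · show ‖z 5‖ = 1
      rw [hz5, norm_neg]; exact Complex.norm_exp_ofReal_mul_I θ₂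
  -- the master table of identities
  have E : ∀ k : ZMod 6,
      (1 - (r' (k+1) : ℂ)) * z (k+1) + ((r' k : ℂ) + (r' (k+1) : ℂ)) * z (k-1)
        = (1 - (r' k : ℂ)) * z k := by
    intro k
    fin_cases k
    · show (1 - (r' (0+1) : ℂ)) * z (0+1) + ((r' 0 : ℂ) + (r' (0+1) : ℂ)) * z (0-1)
        = (1 - (r' 0 : ℂ)) * z 0
      rw [show ((0 : ZMod 6)+1) = 1 by decide, show ((0 : ZMod 6)-1) = 5 by decide,
        hv0, hv1, hz1, hz5, hz0]
      linear_combination -key₃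
    · show (1 - (r' (1+1) : ℂ)) * z (1+1) + ((r' 1 : ℂ) + (r' (1+1) : ℂ)) * z (1-1)
        = (1 - (r' 1 : ℂ)) * z 1
      rw [show ((1 : ZMod 6)+1) = 2 by decide, show ((1 : ZMod 6)-1) = 0 by decide,
        hv1, hv2, hz2, hz0, hz1]
      linear_combination key₁
    · show (1 - (r' (2+1) : ℂ)) * z (2+1) + ((r' 2 : ℂ) + (r' (2+1) : ℂ)) * z (2-1)
        = (1 - (r' 2 : ℂ)) * z 2
      rw [show ((2 : ZMod 6)+1) = 3 by decide, show ((2 : ZMod 6)-1) = 1 by decide,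
        hv2, hv3, hz3, hz1, hz2]
      linear_combination key₂
    · show (1 - (r' (3+1) : ℂ)) * z (3+1) + ((r' 3 : ℂ) + (r' (3+1) : ℂ)) * z (3-1)
        = (1 - (r' 3 : ℂ)) * z 3
      rw [show ((3 : ZMod 6)+1) = 4 by decide, show ((3 : ZMod 6)-1) = 2 by decide,
        hv3, hv4, hz4, hz2, hz3]
      linear_combination key₃
    · show (1 - (r' (4+1) : ℂ)) * z (4+1) + ((r' 4 : ℂ) + (r' (4+1) : ℂ)) * z (4-1)
        = (1 - (r' 4 : ℂ)) * z 4
      rw [show ((4 : ZMod 6)+1) = 5 by decide, show ((4 : ZMod 6)-1) = 3 by decide,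
        hv4, hv5, hz5, hz3, hz4]
      linear_combination -key₁
    · show (1 - (r' (5+1) : ℂ)) * z (5+1) + ((r' 5 : ℂ) + (r' (5+1) : ℂ)) * z (5-1)
        = (1 - (r' 5 : ℂ)) * z 5
      rw [show ((5 : ZMod 6)+1) = 0 by decide, show ((5 : ZMod 6)-1) = 4 by decide,
        hv5, hv0, hz0, hz4, hz5]
      linear_combination -key₂
  -- antipodal flip of z
  have hzflip : ∀ k : ZMod 6, z (k + 2) = -z (k - 1) := by
    intro k
    have h := hzsym (k - 1)
    rwa [show k - 1 + 3 = k + 2 by ring] at h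
  -- identification of the intersection points
  have hwW : ∀ k : ZMod 6, w k = (1 - (r' k : ℂ)) * z k - (r' k : ℂ) * z (k - 1) := by
    intro k
    refine flower_line_inter_unique (hnp k) ?_ ?_ (hw k).1 (hw k).2 |>.symm
    · refine ⟨1 - r' (k+1), ?_⟩
      rw [Complex.real_smul]
      push_cast
      linear_combination -(E k)
    · refine ⟨r' k, ?_⟩
      rw [Complex.real_smul, hzflip k]
      push_cast
      ring
  -- assemble the flower
  refine ⟨fun k => (1 - (r' k : ℂ)) * z k, r', fun k => ?_⟩
  have hEk := E k
  have hEk' := E (k - 1)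
  rw [show k - 1 + 1 = k by ring] at hEk'
  have h1mr : ((1 : ℝ) - r' k : ℝ) ≥ 0 := by linarith [hr'lt k]
  refine ⟨hr'pos k, ?_, ?_, ?_, ?_, ?_, ?_, hr'3 k⟩
  · -- dist (w (k-1)) (c k) = r' k
    have hd : w (k-1) - (1 - (r' k : ℂ)) * z k = (r' k : ℂ) * z (k-1-1) := by
      rw [hwW (k-1)]
      linear_combination -hEk'
    rw [Complex.dist_eq, hd, norm_mul, Complex.norm_real, Real.norm_eq_abs, habs (k-1-1), mul_one,
      _root_.abs_of_pos (hr'pos k)]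
  · -- dist (z k) (c k) = r' k
    have hd : z k - (1 - (r' k : ℂ)) * z k = (r' k : ℂ) * z k := by ring
    rw [Complex.dist_eq, hd, norm_mul, Complex.norm_real, Real.norm_eq_abs, habs k, mul_one,
      _root_.abs_of_pos (hr'pos k)]
  · -- dist (w k) (c k) = r' k
    have hd : w k - (1 - (r' k : ℂ)) * z k = (r' k : ℂ) * z (k+2) := by
      rw [hwW k, hzflip k]
      ring
    rw [Complex.dist_eq, hd, norm_mul, Complex.norm_real, Real.norm_eq_abs, habs (k+2), mul_one,
      _root_.abs_of_pos (hr'pos k)]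
  · -- dist (c k) 0 = 1 - r' k
    have hd : (1 - (r' k : ℂ)) * z k - 0 = (((1 : ℝ) - r' k : ℝ) : ℂ) * z k := by
      push_cast; ring
    rw [Complex.dist_eq, hd, norm_mul, Complex.norm_real, Real.norm_eq_abs, habs k, mul_one,
      _root_.abs_of_nonneg h1mr]
  · -- dist (c k) (c (k+1)) = r' k + r' (k+1)
    have hd : (1 - (r' k : ℂ)) * z k - (1 - (r' (k+1) : ℂ)) * z (k+1)
        = (((r' k + r' (k+1) : ℝ)) : ℂ) * z (k-1) := by
      push_cast
      linear_combination -hEk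
    rw [Complex.dist_eq, hd, norm_mul, Complex.norm_real, Real.norm_eq_abs, habs (k-1), mul_one,
      _root_.abs_of_nonneg (by have := hr'pos k; have := hr'pos (k+1); linarith : (0:ℝ) ≤ r' k + r' (k+1))]
  · -- c (k+3) = -c k
    show (1 - (r' (k+3) : ℂ)) * z (k+3) = -((1 - (r' k : ℂ)) * z k)
    rw [hr'3 k, hzsym k]
    ring
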